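/- Let (p,p') be a pair of coprime positive integers with p ≥ 2, set a = p'/p, and let ε,ε' ∈ {0,1}. For all λ = (r,s;θ) and λ' = (r',s';θ') in 𝒮_{p,p'} one has the symmetry S^{aa,(ε,ε')}_{λ,λ'} = S^{aa,(ε',ε)}_{λ',λ}, and the unitarity Σ_{λ''∈𝒮_{p,p'}} S^{aa,(ε,ε')}_{λ,λ''} · conj( S^{aa,(ε',ε)}_{λ'',λ'} ) = 1 if λ = λ' and = 0 otherwise, where conj denotes complex conjugation. -/

import Mathlib

open Complex
open scoped Real

noncomputable section

/-- The set of discrete spectra 𝒮_{p,p'} (as a set of triples (r,s,θ)). -/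
def SpectraSet (p p' : ℤ) : Set (ℤ × ℤ × ℤ) :=
  {x | 1 ≤ x.1 ∧ x.1 ≤ p - 1 ∧ 0 ≤ x.2.1 ∧ x.2.1 ≤ p' - 1 ∧
    ∃ m : ℤ, 0 ≤ m ∧ m ≤ p - 1 ∧
      2 * m + 2 * p' - p = 2 * (x.1 - 2 * x.2.2) * p' - (2 * x.2.1 + 1) * p}

/-- Atypical-atypical modular S-data. -/
noncomputable def Saa (p p' : ℤ) (ε ε' : ℕ) (x y : ℤ × ℤ × ℤ) : ℂ :=
  Complex.I ^ (-((ε : ℤ) * ε')) *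
    (-1 : ℂ) ^ ((1 - (ε' : ℤ)) * x.2.1 + (1 - (ε : ℤ)) * y.2.1) * (2 / (p : ℂ)) *
    (Real.sin (π * ((p' : ℝ) / p) * x.1 * y.1) : ℂ) *
    Complex.exp ((π : ℂ) * Complex.I * ((p' : ℂ) / p) *
      ((x.1 : ℂ) - 2 * x.2.2 - 1 + ε) * ((y.1 : ℂ) - 2 * y.2.2 - 1 + ε'))

namespace SaaAux

/-- the basic root of unity -/
noncomputable def ζ (p p' : ℤ) : ℂ := Complex.exp (π * Complex.I * p' / p)

variable {p p' : ℤ}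

lemma zeta_ne_zero : ζ p p' ≠ 0 := Complex.exp_ne_zero _

lemma zeta_zpow (c : ℤ) : ζ p p' ^ c = Complex.exp (π * Complex.I * (p' * c) / p) := by
  rw [ζ, ← Complex.exp_int_mul]
  congr 1
  push_cast
  ring

lemma zeta_zpow_eq_one_iff (hp : 0 < p) (c : ℤ) :
    ζ p p' ^ c = 1 ↔ 2 * p ∣ p' * c := by
  rw [zeta_zpow, Complex.exp_eq_one_iff]
  have hp0 : (p : ℂ) ≠ 0 := Int.cast_ne_zero.2 hp.ne'
  have hπ : (π : ℂ) ≠ 0 := Complex.ofReal_ne_zero.2 Real.pi_ne_zero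
  constructor
  · rintro ⟨n, hn⟩
    refine ⟨n, ?_⟩
    have h2 : ((p' * c : ℤ) : ℂ) = ((2 * p * n : ℤ) : ℂ) := by
      push_cast
      field_simp at hn
      have hI : (Complex.I : ℂ) ≠ 0 := Complex.I_ne_zero
      -- hn : π * I * (p'*c) = n * (2*π*I) * p (roughly)
      apply mul_left_cancel₀ (mul_ne_zero hπ hI)
      linear_combination (↑π * Complex.I) * hn
    exact_mod_cast h2
  · rintro ⟨n, hn⟩
    refine ⟨n, ?_⟩
    have : ((p' * c : ℤ) : ℂ) = ((2 * p * n : ℤ) : ℂ) := by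
      exact_mod_cast congrArg (fun k : ℤ => (k : ℂ)) hn
    push_cast at this
    field_simp
    linear_combination this


lemma zeta_pow_cp (hp : 0 < p) (c : ℤ) :
    (ζ p p' ^ c) ^ p.toNat = (-1 : ℂ) ^ (p' * c) := by
  have hp0 : (p : ℂ) ≠ 0 := Int.cast_ne_zero.2 hp.ne'
  have htn : ((p.toNat : ℤ)) = p := Int.toNat_of_nonneg hp.le
  rw [← zpow_natCast, ← zpow_mul, htn, zeta_zpow]
  have harg : π * Complex.I * ((p' : ℂ) * (c * p)) / p = ((p' * c : ℤ) : ℂ) * (π * Complex.I) := by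
    push_cast
    field_simp
  rw [show ((p' : ℂ) * ((c * p : ℤ) : ℂ)) = ((p' : ℂ) * (c * p)) by push_cast; ring, harg,
    Complex.exp_int_mul, Complex.exp_pi_mul_I]

lemma neg_zeta_pow_cp (hp : 0 < p) (c : ℤ) :
    (-(ζ p p' ^ c)) ^ p.toNat = (-1 : ℂ) ^ (p + p' * c) := by
  have htn : ((p.toNat : ℤ)) = p := Int.toNat_of_nonneg hp.le
  rw [neg_pow, zeta_pow_cp hp, zpow_add₀ (by norm_num : (-1:ℂ) ≠ 0)]
  congr 1
  rw [← zpow_natCast, htn]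

/-- basic geometric sums -/
noncomputable def G (p p' c : ℤ) : ℂ := ∑ r ∈ Finset.range p.toNat, (ζ p p' ^ c) ^ r

noncomputable def G' (p p' c : ℤ) : ℂ := ∑ r ∈ Finset.range p.toNat, (-(ζ p p' ^ c)) ^ r

lemma G_eq_p (hp : 0 < p) {c : ℤ} (h : 2 * p ∣ p' * c) : G p p' c = (p : ℂ) := by
  rw [G]
  have h1 : ζ p p' ^ c = 1 := (zeta_zpow_eq_one_iff hp c).2 h
  simp only [h1, one_pow, Finset.sum_const, Finset.card_range, nsmul_eq_mul, mul_one]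
  exact_mod_cast congrArg (fun k : ℤ => (k : ℂ)) (Int.toNat_of_nonneg hp.le)

lemma G_eq_zero (hp : 0 < p) {c : ℤ} (he : Even (p' * c)) (h : ¬ 2 * p ∣ p' * c) :
    G p p' c = 0 := by
  have h1 : ζ p p' ^ c ≠ 1 := fun hh => h ((zeta_zpow_eq_one_iff hp c).1 hh)
  rw [G, geom_sum_eq h1, zeta_pow_cp hp, he.neg_one_zpow, sub_self, zero_div]

lemma not_dvd_of_odd {c : ℤ} (ho : Odd (p' * c)) : ¬ 2 * p ∣ p' * c := by
  rintro ⟨k, hk⟩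
  exact (Int.not_even_iff_odd.2 ho) ⟨p * k, by linarith⟩

lemma pair_alg {w : ℂ} (hw0 : w ≠ 0) (hw1 : w - 1 ≠ 0) :
    (-1 - 1) / (w - 1) + (-1 - 1) / (w⁻¹ - 1) = 2 := by
  have h2 : w⁻¹ - 1 = (1 - w) / w := by field_simp
  rw [h2, div_div_eq_mul_div, show (1 - w) = -(w - 1) by ring, div_neg, ← sub_eq_add_neg,
    ← sub_div, show (-1 - 1 : ℂ) - (-1 - 1) * w = 2 * (w - 1) by ring, mul_div_assoc,
    div_self hw1, mul_one]

lemma zeta_zpow_p (hp : 0 < p) : ζ p p' ^ p = (-1 : ℂ) ^ p' := by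
  have hp0 : (p : ℂ) ≠ 0 := Int.cast_ne_zero.2 hp.ne'
  rw [zeta_zpow]
  rw [show π * Complex.I * ((p' : ℂ) * p) / p = ((p' : ℤ) : ℂ) * (π * Complex.I) by
    field_simp]
  rw [Complex.exp_int_mul, Complex.exp_pi_mul_I]

lemma G_pair (hp : 0 < p) {c : ℤ} (ho : Odd (p' * c)) :
    G p p' c + G p p' (-c) = 2 := by
  have ho' : Odd (p' * (-c)) := by
    rcases ho with ⟨k, hk⟩; exact ⟨-k - 1, by linarith⟩
  have h1 : ζ p p' ^ c ≠ 1 := fun hh => not_dvd_of_odd ho ((zeta_zpow_eq_one_iff hp c).1 hh)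
  have h1' : ζ p p' ^ (-c) ≠ 1 := fun hh => not_dvd_of_odd ho' ((zeta_zpow_eq_one_iff hp (-c)).1 hh)
  rw [G, G, geom_sum_eq h1, geom_sum_eq h1', zeta_pow_cp hp, zeta_pow_cp hp,
    ho.neg_one_zpow, ho'.neg_one_zpow]
  set w := ζ p p' ^ c with hw
  have hw0 : w ≠ 0 := zpow_ne_zero _ zeta_ne_zero
  have hwinv : ζ p p' ^ (-c) = w⁻¹ := by rw [hw, zpow_neg]
  rw [hwinv]
  have hd1 : w - 1 ≠ 0 := sub_ne_zero.2 h1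
  exact pair_alg hw0 hd1

lemma zeta_zpow_ne_neg_one (hp : 0 < p) (hco : IsCoprime p p') {c : ℤ}
    (hc : -(p-1) ≤ c) (hc' : c ≤ p - 1) : ζ p p' ^ c ≠ -1 := by
  intro h
  have h2 : ζ p p' ^ (2 * c) = 1 := by
    rw [two_mul, zpow_add₀ zeta_ne_zero, h]; ring
  have hd : 2 * p ∣ p' * (2 * c) := (zeta_zpow_eq_one_iff hp _).1 h2
  have hd2 : p ∣ p' * c := by
    rcases hd with ⟨k, hk⟩
    exact ⟨k, by linarith⟩
  have hdc : p ∣ c := hco.dvd_of_dvd_mul_left hd2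
  have hc0 : c = 0 := by
    rcases hdc with ⟨k, hk⟩
    rcases lt_trichotomy k 0 with h | h | h
    · nlinarith
    · simp [hk, h]
    · nlinarith
  rw [hc0] at h
  norm_num at h

lemma G'_eq_zero (hp : 0 < p) (hco : IsCoprime p p') {c : ℤ}
    (hc : -(p-1) ≤ c) (hc' : c ≤ p - 1) (he : Even (p + p' * c)) :
    G' p p' c = 0 := by
  have h1 : -(ζ p p' ^ c) ≠ 1 := by
    intro hh
    exact zeta_zpow_ne_neg_one hp hco hc hc' (neg_eq_iff_eq_neg.1 hh)
  rw [G', geom_sum_eq h1, neg_zeta_pow_cp hp, he.neg_one_zpow, sub_self, zero_div]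

lemma G'_pair (hp : 0 < p) (hco : IsCoprime p p') {c : ℤ} (ho : Odd (p + p' * c)) :
    G' p p' c + G' p p' (-c) = 2 := by
  have hne : ∀ d : ℤ, Odd (p + p' * d) → -(ζ p p' ^ d) ≠ 1 := by
    intro d hod hh
    have h : ζ p p' ^ d = -1 := neg_eq_iff_eq_neg.1 hh
    have h2 : ζ p p' ^ (2 * d) = 1 := by
      rw [two_mul, zpow_add₀ zeta_ne_zero, h]; ring
    have hd2 : p ∣ p' * d := by
      rcases (zeta_zpow_eq_one_iff hp _).1 h2 with ⟨k, hk⟩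
      exact ⟨k, by linarith⟩
    rcases hco.dvd_of_dvd_mul_left hd2 with ⟨k, hk⟩
    have hzc : ζ p p' ^ d = (-1 : ℂ) ^ (p' * k) := by
      rw [hk, zpow_mul, zeta_zpow_p hp, ← zpow_mul]
    rw [h] at hzc
    have hodd : Odd (p' * k) := by
      by_contra hev
      rw [(Int.not_odd_iff_even.1 hev).neg_one_zpow] at hzc
      norm_num at hzc
    have : Even (p + p' * d) := by
      rcases hodd with ⟨j, hj⟩
      exact ⟨p + p * j, by rw [hk]; ring_nf; nlinarith [hj]⟩
    exact (Int.not_even_iff_odd.2 hod) this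
  have ho' : Odd (p + p' * (-c)) := by
    rcases ho with ⟨k, hk⟩
    refine ⟨k - p' * c, by linarith⟩
  have h1 := hne c ho
  have h1' := hne (-c) ho'
  rw [G', G', geom_sum_eq h1, geom_sum_eq h1', neg_zeta_pow_cp hp, neg_zeta_pow_cp hp,
    ho.neg_one_zpow, ho'.neg_one_zpow]
  set w := ζ p p' ^ c with hw
  have hw0 : w ≠ 0 := zpow_ne_zero _ zeta_ne_zero
  have hwinv : ζ p p' ^ (-c) = w⁻¹ := by rw [hw, zpow_neg]
  rw [hwinv]
  have hd1 : -w - 1 ≠ 0 := by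
    intro hz; exact h1 (by linear_combination hz)
  rw [show (-w⁻¹ : ℂ) = (-w)⁻¹ by rw [inv_neg]]
  exact pair_alg (neg_ne_zero.2 hw0) hd1



lemma sum_Icc_zpow (hp : 0 < p) (w : ℂ) :
    ∑ t ∈ Finset.Icc (0:ℤ) (p-1), w ^ t = ∑ r ∈ Finset.range p.toNat, w ^ r := by
  refine Finset.sum_bij' (fun t _ => t.toNat) (fun r _ => (r : ℤ)) ?_ ?_ ?_ ?_ ?_
  · intro t ht
    simp only [Finset.mem_Icc] at ht
    simp only [Finset.mem_range]
    omega
  · intro r hr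
    simp only [Finset.mem_range] at hr
    simp only [Finset.mem_Icc]
    omega
  · intro t ht
    simp only [Finset.mem_Icc] at ht
    simpa using Int.toNat_of_nonneg ht.1
  · intro r hr
    simp
  · intro t ht
    simp only [Finset.mem_Icc] at ht
    rw [← zpow_natCast, Int.toNat_of_nonneg ht.1]

lemma sum_Icc_one_zpow (hp : 0 < p) (w : ℂ) :
    ∑ r ∈ Finset.Icc (1:ℤ) (p-1), w ^ r = (∑ r ∈ Finset.range p.toNat, w ^ r) - 1 := by
  have h0 : (0 : ℤ) ∉ Finset.Icc (1:ℤ) (p-1) := by simp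
  have hins : Finset.Icc (0:ℤ) (p-1) = insert 0 (Finset.Icc (1:ℤ) (p-1)) := by
    ext n
    simp only [Finset.mem_Icc, Finset.mem_insert]
    omega
  have := sum_Icc_zpow (p := p) hp w
  rw [hins, Finset.sum_insert h0] at this
  simp only [zpow_zero] at this
  linear_combination this

lemma double_sum_eval (hp : 0 < p) (A B : ℤ → ℂ) :
    ∑ rt ∈ ((Finset.Icc (1:ℤ) (p-1)) ×ˢ (Finset.Icc (0:ℤ) (p-1))).filter
        (fun rt => ¬ (2 ∣ (rt.1 + rt.2))), A rt.1 * B rt.2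
      = (∑ r ∈ Finset.Icc (1:ℤ) (p-1), A r) * (∑ t ∈ Finset.Icc (0:ℤ) (p-1), B t) / 2
        - (∑ r ∈ Finset.Icc (1:ℤ) (p-1), (-1:ℂ)^r * A r) *
            (∑ t ∈ Finset.Icc (0:ℤ) (p-1), (-1:ℂ)^t * B t) / 2 := by
  rw [Finset.sum_mul_sum, Finset.sum_mul_sum]
  rw [← Finset.sum_product' (f := fun r t => A r * B t),
    ← Finset.sum_product' (f := fun r t => ((-1:ℂ)^r * A r) * ((-1:ℂ)^t * B t))]
  rw [Finset.sum_div, Finset.sum_div, ← Finset.sum_sub_distrib, Finset.sum_filter]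
  apply Finset.sum_congr rfl
  intro rt hrt
  have hpow : (-1:ℂ)^rt.1 * A rt.1 * ((-1:ℂ)^rt.2 * B rt.2)
      = (-1:ℂ)^(rt.1+rt.2) * (A rt.1 * B rt.2) := by
    rw [zpow_add₀ (by norm_num : (-1:ℂ) ≠ 0)]; ring
  by_cases hd : (2:ℤ) ∣ rt.1 + rt.2
  · have he : Even (rt.1 + rt.2) := by rw [Int.even_iff]; omega
    simp only [hd, not_true_eq_false, if_false]
    rw [hpow, he.neg_one_zpow]
    ring
  · have ho : Odd (rt.1 + rt.2) := by rw [Int.odd_iff]; omega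
    simp only [hd, not_false_eq_true, if_true]
    rw [hpow, ho.neg_one_zpow]
    ring

/-- the `t`-value of a triple -/
def tval (x : ℤ × ℤ × ℤ) : ℤ := x.1 - 2 * x.2.2 - 1

lemma mem_spectra_iff {x : ℤ × ℤ × ℤ} :
    x ∈ SpectraSet p p' ↔
      1 ≤ x.1 ∧ x.1 ≤ p - 1 ∧ 0 ≤ x.2.1 ∧ x.2.1 ≤ p' - 1 ∧
        0 ≤ tval x * p' - x.2.1 * p ∧ tval x * p' - x.2.1 * p ≤ p - 1 := by
  unfold SpectraSet tval
  simp only [Set.mem_setOf_eq]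
  constructor
  · rintro ⟨h1, h2, h3, h4, m, hm0, hm1, he⟩
    have h2m : 2 * m = 2 * ((x.1 - 2 * x.2.2 - 1) * p' - x.2.1 * p) := by linear_combination he
    have hm : m = (x.1 - 2 * x.2.2 - 1) * p' - x.2.1 * p := by linarith
    exact ⟨h1, h2, h3, h4, by linarith, by linarith⟩
  · rintro ⟨h1, h2, h3, h4, h5, h6⟩
    exact ⟨h1, h2, h3, h4, (x.1 - 2 * x.2.2 - 1) * p' - x.2.1 * p, h5, h6, by ring⟩

lemma tval_range (hp : 2 ≤ p) (hp' : 1 ≤ p') {x : ℤ × ℤ × ℤ} (hx : x ∈ SpectraSet p p') :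
    0 ≤ tval x ∧ tval x ≤ p - 1 := by
  obtain ⟨h1, h2, h3, h4, h5, h6⟩ := mem_spectra_iff.1 hx
  constructor
  · by_contra h
    push_neg at h
    nlinarith [mul_nonneg h3 (by linarith : (0:ℤ) ≤ p)]
  · by_contra h
    push_neg at h
    nlinarith [mul_le_mul_of_nonneg_right h4 (by linarith : (0:ℤ) ≤ p)]

lemma spectra_inj (hp : 2 ≤ p) {x y : ℤ × ℤ × ℤ} (hx : x ∈ SpectraSet p p')
    (hy : y ∈ SpectraSet p p') (h1 : x.1 = y.1) (ht : tval x = tval y) : x = y := by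
  obtain ⟨_, _, hx3, _, hx5, hx6⟩ := mem_spectra_iff.1 hx
  obtain ⟨_, _, hy3, _, hy5, hy6⟩ := mem_spectra_iff.1 hy
  unfold tval at ht
  have hs : x.2.1 = y.2.1 := by
    have hd : (x.2.1 - y.2.1) * p = (tval y * p' - y.2.1 * p) - (tval x * p' - x.2.1 * p) := by
      unfold tval; rw [h1] at ht ⊢; nlinarith [ht]
    rcases lt_trichotomy (x.2.1 - y.2.1) 0 with h | h | h
    · nlinarith
    · omega
    · nlinarith
  have hθ : x.2.2 = y.2.2 := by omega
  exact Prod.ext h1 (Prod.ext hs hθ)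

/-- decidable finset version of the spectra set -/
def Fset (p p' : ℤ) : Finset (ℤ × ℤ × ℤ) :=
  ((Finset.Icc 1 (p-1)) ×ˢ (Finset.Icc 0 (p'-1)) ×ˢ (Finset.Icc (-p) p)).filter
    (fun x => 0 ≤ tval x * p' - x.2.1 * p ∧ tval x * p' - x.2.1 * p ≤ p - 1)

def Gset (p : ℤ) : Finset (ℤ × ℤ) :=
  ((Finset.Icc 1 (p-1)) ×ˢ (Finset.Icc 0 (p-1))).filter (fun rt => ¬ (2 ∣ (rt.1 + rt.2)))

lemma mem_Fset_iff {x : ℤ × ℤ × ℤ} (hp : 2 ≤ p) (hp' : 1 ≤ p') :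
    x ∈ Fset p p' ↔ x ∈ SpectraSet p p' := by
  rw [Fset, Finset.mem_filter, Finset.mem_product, Finset.mem_product]
  simp only [Finset.mem_Icc]
  rw [mem_spectra_iff]
  constructor
  · rintro ⟨⟨ha, hb, hc⟩, hd, he⟩
    exact ⟨ha.1, ha.2, hb.1, hb.2, hd, he⟩
  · rintro ⟨h1, h2, h3, h4, h5, h6⟩
    have hmem : x ∈ SpectraSet p p' := mem_spectra_iff.2 ⟨h1, h2, h3, h4, h5, h6⟩
    have htr := tval_range hp hp' hmem
    unfold tval at htr
    exact ⟨⟨⟨h1, h2⟩, ⟨h3, h4⟩, by omega⟩, h5, h6⟩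

lemma spectra_eq_coe (hp : 2 ≤ p) (hp' : 1 ≤ p') :
    SpectraSet p p' = (↑(Fset p p') : Set (ℤ × ℤ × ℤ)) := by
  ext x
  rw [Finset.mem_coe, mem_Fset_iff hp hp']

lemma Fset_to_Gset (hp : 2 ≤ p) (hp' : 1 ≤ p') (f : ℤ × ℤ × ℤ → ℂ) (F₂ : ℤ × ℤ → ℂ)
    (hf : ∀ x, f x = F₂ (x.1, tval x)) :
    ∑ x ∈ Fset p p', f x = ∑ rt ∈ Gset p, F₂ rt := by
  have hp0 : (0:ℤ) < p := by omega
  refine Finset.sum_bij' (fun x _ => (x.1, tval x))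
    (fun rt _ => (rt.1, rt.2 * p' / p, (rt.1 - 1 - rt.2) / 2)) ?_ ?_ ?_ ?_ ?_
  · -- maps into Gset
    intro x hx
    have hmem := (mem_Fset_iff hp hp').1 hx
    obtain ⟨h1, h2, _, _, _, _⟩ := mem_spectra_iff.1 hmem
    have htr := tval_range hp hp' hmem
    rw [Gset, Finset.mem_filter, Finset.mem_product]
    simp only [Finset.mem_Icc]
    refine ⟨⟨⟨h1, h2⟩, htr⟩, ?_⟩
    unfold tval
    omega
  · -- maps back into Fset
    rintro ⟨r, t⟩ hrt
    rw [Gset, Finset.mem_filter, Finset.mem_product] at hrt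
    simp only [Finset.mem_Icc] at hrt
    obtain ⟨⟨⟨hr1, hr2⟩, ht1, ht2⟩, hodd⟩ := hrt
    dsimp only
    set s : ℤ := t * p' / p with hs
    set m : ℤ := t * p' % p with hm
    have hdm : p * s + m = t * p' := Int.mul_ediv_add_emod _ _
    have hm0 : 0 ≤ m := Int.emod_nonneg _ (by omega)
    have hm1 : m < p := Int.emod_lt_of_pos _ hp0
    have hs0 : 0 ≤ s := Int.ediv_nonneg (by positivity) (by omega)
    have hs1 : s ≤ p' - 1 := by
      by_contra h
      push_neg at h
      nlinarith [mul_le_mul_of_nonneg_right ht2 (by omega : (0:ℤ) ≤ p')]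
    have htv : tval (r, s, (r - 1 - t) / 2) = t := by
      unfold tval; dsimp only; omega
    rw [mem_Fset_iff hp hp', mem_spectra_iff, htv]
    refine ⟨hr1, hr2, hs0, hs1, by dsimp only; linarith, by dsimp only; linarith⟩
  · -- left inverse
    intro x hx
    have hmem := (mem_Fset_iff hp hp').1 hx
    obtain ⟨h1, h2, h3, h4, h5, h6⟩ := mem_spectra_iff.1 hmem
    dsimp only
    have hθx : x.2.2 = (x.1 - 1 - tval x) / 2 := by unfold tval; omega
    have hsx : x.2.1 = tval x * p' / p := by
      have h := Int.mul_ediv_add_emod (tval x * p') p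
      have hm0 : 0 ≤ tval x * p' % p := Int.emod_nonneg _ (by omega)
      have hm1 : tval x * p' % p < p := Int.emod_lt_of_pos _ hp0
      set q : ℤ := tval x * p' / p with hq
      rcases lt_trichotomy (x.2.1 - q) 0 with hlt | heq | hgt
      · nlinarith [mul_le_mul_of_nonneg_right (by omega : x.2.1 ≤ q - 1)
          (by omega : (0:ℤ) ≤ p)]
      · omega
      · nlinarith [mul_le_mul_of_nonneg_right (by omega : q + 1 ≤ x.2.1)
          (by omega : (0:ℤ) ≤ p)]
    rw [← hsx, ← hθx]
  · -- right inverse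
    rintro ⟨r, t⟩ hrt
    rw [Gset, Finset.mem_filter, Finset.mem_product] at hrt
    simp only [Finset.mem_Icc] at hrt
    dsimp only
    unfold tval
    simp only [Prod.mk.injEq]
    exact ⟨trivial, by omega⟩
  · intro x hx
    rw [hf]

lemma neg_one_ne_zero' : (-1 : ℂ) ≠ 0 := by norm_num

lemma summand_eq (ε ε' : ℕ) (x y z : ℤ × ℤ × ℤ) :
    Saa p p' ε ε' x z * (starRingEnd ℂ) (Saa p p' ε' ε z y) =
      ((-1:ℂ) ^ ((1 - (ε':ℤ)) * (x.2.1 + y.2.1)) * (4 / (p:ℂ)^2)) *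
        (((Real.sin (π * ((p':ℝ)/p) * x.1 * z.1) : ℝ) : ℂ) *
          ((Real.sin (π * ((p':ℝ)/p) * z.1 * y.1) : ℝ) : ℂ) *
          ζ p p' ^ ((tval z + (ε':ℤ)) * (tval x - tval y))) := by
  simp only [Saa]
  rw [map_mul, map_mul, map_mul, map_mul, ← Complex.exp_conj]
  have hconj1 : (starRingEnd ℂ) (Complex.I ^ (-((ε':ℤ) * ε))) = (-Complex.I) ^ (-((ε':ℤ) * ε)) := by
    rw [map_zpow₀, Complex.conj_I]
  have hconj2 : (starRingEnd ℂ)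
      ((-1:ℂ) ^ ((1 - (ε:ℤ)) * z.2.1 + (1 - (ε':ℤ)) * y.2.1)) =
      (-1:ℂ) ^ ((1 - (ε:ℤ)) * z.2.1 + (1 - (ε':ℤ)) * y.2.1) := by
    rw [map_zpow₀, map_neg, map_one]
  have hconj3 : (starRingEnd ℂ) (2 / (p:ℂ)) = 2 / (p:ℂ) := by
    rw [map_div₀, map_ofNat, map_intCast]
  have hconj4 : (starRingEnd ℂ) ((Real.sin (π * ((p':ℝ)/p) * z.1 * y.1) : ℝ) : ℂ) =
      ((Real.sin (π * ((p':ℝ)/p) * z.1 * y.1) : ℝ) : ℂ) := Complex.conj_ofReal _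
  have hconj5 : (starRingEnd ℂ) ((π : ℂ) * Complex.I * ((p' : ℂ) / p) *
        ((z.1 : ℂ) - 2 * z.2.2 - 1 + ε') * ((y.1 : ℂ) - 2 * y.2.2 - 1 + ε)) =
      -((π : ℂ) * Complex.I * ((p' : ℂ) / p) *
        ((z.1 : ℂ) - 2 * z.2.2 - 1 + ε') * ((y.1 : ℂ) - 2 * y.2.2 - 1 + ε)) := by
    simp only [map_mul, map_div₀, map_sub, map_add, map_ofNat, map_one,
      Complex.conj_ofReal, Complex.conj_I, map_intCast, map_natCast]
    ring
  rw [hconj1, hconj2, hconj3, hconj4, hconj5]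
  have hIfac : Complex.I ^ (-((ε:ℤ) * ε')) * (-Complex.I) ^ (-((ε':ℤ) * ε)) = 1 := by
    rw [show -((ε':ℤ) * ε) = -((ε:ℤ) * ε') by ring, ← mul_zpow,
      show Complex.I * -Complex.I = 1 by simp [Complex.I_mul_I], one_zpow]
  have hsgn : (-1:ℂ) ^ ((1 - (ε':ℤ)) * x.2.1 + (1 - (ε:ℤ)) * z.2.1) *
      (-1:ℂ) ^ ((1 - (ε:ℤ)) * z.2.1 + (1 - (ε':ℤ)) * y.2.1) =
      (-1:ℂ) ^ ((1 - (ε':ℤ)) * (x.2.1 + y.2.1)) := by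
    have h2k : ∀ k : ℤ, (-1:ℂ) ^ (2 * k) = 1 := fun k => by
      rw [zpow_mul]; norm_num
    rw [← zpow_add₀ neg_one_ne_zero',
      show (1 - (ε':ℤ)) * x.2.1 + (1 - (ε:ℤ)) * z.2.1 +
          ((1 - (ε:ℤ)) * z.2.1 + (1 - (ε':ℤ)) * y.2.1) =
        (1 - (ε':ℤ)) * (x.2.1 + y.2.1) + 2 * ((1 - (ε:ℤ)) * z.2.1) by ring,
      zpow_add₀ neg_one_ne_zero', h2k, mul_one]
  have hexp : Complex.exp ((π : ℂ) * Complex.I * ((p' : ℂ) / p) *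
        ((x.1 : ℂ) - 2 * x.2.2 - 1 + ε) * ((z.1 : ℂ) - 2 * z.2.2 - 1 + ε')) *
      Complex.exp (-((π : ℂ) * Complex.I * ((p' : ℂ) / p) *
        ((z.1 : ℂ) - 2 * z.2.2 - 1 + ε') * ((y.1 : ℂ) - 2 * y.2.2 - 1 + ε))) =
      ζ p p' ^ ((tval z + (ε':ℤ)) * (tval x - tval y)) := by
    rw [← Complex.exp_add, zeta_zpow]
    congr 1
    unfold tval
    push_cast
    ring
  calc Complex.I ^ (-((ε:ℤ) * ε')) *
        (-1:ℂ) ^ ((1 - (ε':ℤ)) * x.2.1 + (1 - (ε:ℤ)) * z.2.1) * (2 / (p:ℂ)) *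
        ((Real.sin (π * ((p':ℝ)/p) * x.1 * z.1) : ℝ) : ℂ) *
        Complex.exp ((π : ℂ) * Complex.I * ((p' : ℂ) / p) *
          ((x.1 : ℂ) - 2 * x.2.2 - 1 + ε) * ((z.1 : ℂ) - 2 * z.2.2 - 1 + ε')) *
      ((-Complex.I) ^ (-((ε':ℤ) * ε)) *
        (-1:ℂ) ^ ((1 - (ε:ℤ)) * z.2.1 + (1 - (ε':ℤ)) * y.2.1) * (2 / (p:ℂ)) *
        ((Real.sin (π * ((p':ℝ)/p) * z.1 * y.1) : ℝ) : ℂ) *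
        Complex.exp (-((π : ℂ) * Complex.I * ((p' : ℂ) / p) *
          ((z.1 : ℂ) - 2 * z.2.2 - 1 + ε') * ((y.1 : ℂ) - 2 * y.2.2 - 1 + ε))))
      = (Complex.I ^ (-((ε:ℤ) * ε')) * (-Complex.I) ^ (-((ε':ℤ) * ε))) *
        ((-1:ℂ) ^ ((1 - (ε':ℤ)) * x.2.1 + (1 - (ε:ℤ)) * z.2.1) *
          (-1:ℂ) ^ ((1 - (ε:ℤ)) * z.2.1 + (1 - (ε':ℤ)) * y.2.1)) *
        ((2 / (p:ℂ)) * (2 / (p:ℂ))) *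
        (((Real.sin (π * ((p':ℝ)/p) * x.1 * z.1) : ℝ) : ℂ) *
          ((Real.sin (π * ((p':ℝ)/p) * z.1 * y.1) : ℝ) : ℂ)) *
        (Complex.exp ((π : ℂ) * Complex.I * ((p' : ℂ) / p) *
            ((x.1 : ℂ) - 2 * x.2.2 - 1 + ε) * ((z.1 : ℂ) - 2 * z.2.2 - 1 + ε')) *
          Complex.exp (-((π : ℂ) * Complex.I * ((p' : ℂ) / p) *
            ((z.1 : ℂ) - 2 * z.2.2 - 1 + ε') * ((y.1 : ℂ) - 2 * y.2.2 - 1 + ε)))) := by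
        ring
    _ = ((-1:ℂ) ^ ((1 - (ε':ℤ)) * (x.2.1 + y.2.1)) * (4 / (p:ℂ)^2)) *
        (((Real.sin (π * ((p':ℝ)/p) * x.1 * z.1) : ℝ) : ℂ) *
          ((Real.sin (π * ((p':ℝ)/p) * z.1 * y.1) : ℝ) : ℂ) *
          ζ p p' ^ ((tval z + (ε':ℤ)) * (tval x - tval y))) := by
        rw [hIfac, hsgn, hexp]
        ring

lemma sin_as_zeta (hp : 2 ≤ p) (n r : ℤ) :
    ((Real.sin (π * ((p':ℝ)/p) * n * r) : ℝ) : ℂ) =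
      (ζ p p' ^ (-(n*r)) - ζ p p' ^ (n*r)) * Complex.I / 2 := by
  have hp0 : (p:ℂ) ≠ 0 := Int.cast_ne_zero.2 (by omega)
  rw [Complex.ofReal_sin, Complex.sin, zeta_zpow, zeta_zpow]
  congr 3
  · push_cast
    field_simp
  · push_cast
    field_simp

lemma sum_r_plain (hp : 2 ≤ p) (u v : ℤ) :
    ∑ r ∈ Finset.Icc (1:ℤ) (p-1),
        ((Real.sin (π * ((p':ℝ)/p) * u * r) : ℝ) : ℂ) *
          ((Real.sin (π * ((p':ℝ)/p) * r * v) : ℝ) : ℂ) =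
      -(1/4) * (G p p' (u+v) + G p p' (-(u+v)) - G p p' (u-v) - G p p' (-(u-v))) := by
  have hp0 : (0:ℤ) < p := by omega
  have hz := @zeta_ne_zero p p'
  have hptw : ∀ r : ℤ,
      ((Real.sin (π * ((p':ℝ)/p) * u * r) : ℝ) : ℂ) *
        ((Real.sin (π * ((p':ℝ)/p) * r * v) : ℝ) : ℂ) =
      -(1/4) * ((ζ p p' ^ (u+v)) ^ r + (ζ p p' ^ (-(u+v))) ^ r
        - (ζ p p' ^ (u-v)) ^ r - (ζ p p' ^ (-(u-v))) ^ r) := by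
    intro r
    have hvr : π * ((p':ℝ)/p) * r * v = π * ((p':ℝ)/p) * v * r := by ring
    rw [hvr, sin_as_zeta hp, sin_as_zeta hp]
    have key : ∀ a b : ℤ, ζ p p' ^ a * ζ p p' ^ b = ζ p p' ^ (a + b) :=
      fun a b => (zpow_add₀ hz a b).symm
    have e1 : (ζ p p' ^ (u+v)) ^ r = ζ p p' ^ (u*r) * ζ p p' ^ (v*r) := by
      rw [← zpow_mul, key]; congr 1; ring
    have e2 : (ζ p p' ^ (-(u+v))) ^ r = ζ p p' ^ (-(u*r)) * ζ p p' ^ (-(v*r)) := by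
      rw [← zpow_mul, key]; congr 1; ring
    have e3 : (ζ p p' ^ (u-v)) ^ r = ζ p p' ^ (u*r) * ζ p p' ^ (-(v*r)) := by
      rw [← zpow_mul, key]; congr 1; ring
    have e4 : (ζ p p' ^ (-(u-v))) ^ r = ζ p p' ^ (-(u*r)) * ζ p p' ^ (v*r) := by
      rw [← zpow_mul, key]; congr 1; ring
    rw [e1, e2, e3, e4]
    have hI : Complex.I * Complex.I = -1 := Complex.I_mul_I
    linear_combination (ζ p p' ^ (-(u*r)) - ζ p p' ^ (u*r)) *
      (ζ p p' ^ (-(v*r)) - ζ p p' ^ (v*r)) / 4 * hI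
  rw [Finset.sum_congr rfl (fun r _ => hptw r)]
  rw [← Finset.mul_sum]
  congr 1
  rw [Finset.sum_sub_distrib, Finset.sum_sub_distrib, Finset.sum_add_distrib,
    sum_Icc_one_zpow hp0, sum_Icc_one_zpow hp0, sum_Icc_one_zpow hp0, sum_Icc_one_zpow hp0]
  simp only [G]
  ring

lemma sum_r_sign (hp : 2 ≤ p) (u v : ℤ) :
    ∑ r ∈ Finset.Icc (1:ℤ) (p-1), (-1:ℂ)^r *
        (((Real.sin (π * ((p':ℝ)/p) * u * r) : ℝ) : ℂ) *
          ((Real.sin (π * ((p':ℝ)/p) * r * v) : ℝ) : ℂ)) =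
      -(1/4) * (G' p p' (u+v) + G' p p' (-(u+v)) - G' p p' (u-v) - G' p p' (-(u-v))) := by
  have hp0 : (0:ℤ) < p := by omega
  have hz := @zeta_ne_zero p p'
  have hneg : ∀ c r : ℤ, (-1:ℂ)^r * (ζ p p' ^ c) ^ r = (-(ζ p p' ^ c)) ^ r := by
    intro c r
    rw [show (-(ζ p p' ^ c)) = (-1) * ζ p p' ^ c by ring, mul_zpow]
  have hptw : ∀ r : ℤ, (-1:ℂ)^r *
      (((Real.sin (π * ((p':ℝ)/p) * u * r) : ℝ) : ℂ) *
        ((Real.sin (π * ((p':ℝ)/p) * r * v) : ℝ) : ℂ)) =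
      -(1/4) * ((-(ζ p p' ^ (u+v))) ^ r + (-(ζ p p' ^ (-(u+v)))) ^ r
        - (-(ζ p p' ^ (u-v))) ^ r - (-(ζ p p' ^ (-(u-v)))) ^ r) := by
    intro r
    have hvr : π * ((p':ℝ)/p) * r * v = π * ((p':ℝ)/p) * v * r := by ring
    rw [hvr, sin_as_zeta hp, sin_as_zeta hp, ← hneg, ← hneg, ← hneg, ← hneg]
    have key : ∀ a b : ℤ, ζ p p' ^ a * ζ p p' ^ b = ζ p p' ^ (a + b) :=
      fun a b => (zpow_add₀ hz a b).symm
    have e1 : (ζ p p' ^ (u+v)) ^ r = ζ p p' ^ (u*r) * ζ p p' ^ (v*r) := by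
      rw [← zpow_mul, key]; congr 1; ring
    have e2 : (ζ p p' ^ (-(u+v))) ^ r = ζ p p' ^ (-(u*r)) * ζ p p' ^ (-(v*r)) := by
      rw [← zpow_mul, key]; congr 1; ring
    have e3 : (ζ p p' ^ (u-v)) ^ r = ζ p p' ^ (u*r) * ζ p p' ^ (-(v*r)) := by
      rw [← zpow_mul, key]; congr 1; ring
    have e4 : (ζ p p' ^ (-(u-v))) ^ r = ζ p p' ^ (-(u*r)) * ζ p p' ^ (v*r) := by
      rw [← zpow_mul, key]; congr 1; ring
    rw [e1, e2, e3, e4]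
    have hI : Complex.I * Complex.I = -1 := Complex.I_mul_I
    linear_combination (-1:ℂ)^r * (ζ p p' ^ (-(u*r)) - ζ p p' ^ (u*r)) *
      (ζ p p' ^ (-(v*r)) - ζ p p' ^ (v*r)) / 4 * hI
  rw [Finset.sum_congr rfl (fun r _ => hptw r), ← Finset.mul_sum]
  congr 1
  rw [Finset.sum_sub_distrib, Finset.sum_sub_distrib, Finset.sum_add_distrib,
    sum_Icc_one_zpow hp0, sum_Icc_one_zpow hp0, sum_Icc_one_zpow hp0, sum_Icc_one_zpow hp0]
  simp only [G']
  ring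

lemma sum_t_plain (hp : 2 ≤ p) (D e : ℤ) :
    ∑ t ∈ Finset.Icc (0:ℤ) (p-1), ζ p p' ^ ((t + e) * D) =
      ζ p p' ^ (e * D) * G p p' D := by
  have hz := @zeta_ne_zero p p'
  have hptw : ∀ t : ℤ, ζ p p' ^ ((t + e) * D) = ζ p p' ^ (e * D) * (ζ p p' ^ D) ^ t := by
    intro t
    rw [← zpow_mul, ← zpow_add₀ hz]
    congr 1; ring
  rw [Finset.sum_congr rfl (fun t _ => hptw t), ← Finset.mul_sum,
    sum_Icc_zpow (by omega : (0:ℤ) < p), G]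

lemma sum_t_sign (hp : 2 ≤ p) (D e : ℤ) :
    ∑ t ∈ Finset.Icc (0:ℤ) (p-1), (-1:ℂ)^t * ζ p p' ^ ((t + e) * D) =
      ζ p p' ^ (e * D) * G' p p' D := by
  have hz := @zeta_ne_zero p p'
  have hptw : ∀ t : ℤ, (-1:ℂ)^t * ζ p p' ^ ((t + e) * D) =
      ζ p p' ^ (e * D) * (-(ζ p p' ^ D)) ^ t := by
    intro t
    have h1 : (-(ζ p p' ^ D)) ^ t = (-1:ℂ)^t * (ζ p p' ^ D)^t := by
      rw [show (-(ζ p p' ^ D)) = (-1) * ζ p p' ^ D by ring, mul_zpow]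
    rw [h1, ← zpow_mul, show (t + e) * D = e * D + D * t by ring, zpow_add₀ hz]
    ring
  rw [Finset.sum_congr rfl (fun t _ => hptw t), ← Finset.mul_sum,
    sum_Icc_zpow (by omega : (0:ℤ) < p), G']

lemma small_dvd_zero (hp : 2 ≤ p) {c : ℤ} (h : p ∣ c) (hb1 : -(p-1) ≤ c) (hb2 : c ≤ p-1) :
    c = 0 := by
  rcases h with ⟨k, hk⟩
  rcases lt_trichotomy k 0 with h1 | h1 | h1
  · nlinarith
  · simp [hk, h1]
  · nlinarith

lemma p_dvd_of_two_p_dvd {n : ℤ} (h : 2 * p ∣ n) : p ∣ n := by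
  rcases h with ⟨k, hk⟩
  exact ⟨2 * k, by linarith⟩

lemma claimA (hp : 2 ≤ p) (hp' : 1 ≤ p') (hco : IsCoprime p p') {u v D : ℤ}
    (hu1 : 1 ≤ u) (hu2 : u ≤ p-1) (hv1 : 1 ≤ v) (hv2 : v ≤ p-1)
    (hD1 : -(p-1) ≤ D) (hD2 : D ≤ p-1) (hXD : ∃ k : ℤ, u + v - D = 2 * k)
    (hne : ¬ (u = v ∧ D = 0)) :
    (G p p' (u+v) + G p p' (-(u+v)) - G p p' (u-v) - G p p' (-(u-v))) * G p p' D = 0 := by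
  have hp0 : (0:ℤ) < p := by omega
  obtain ⟨k, hk⟩ := hXD
  rcases Int.even_or_odd (p' * D) with hpar | hpar
  · -- p'D even
    by_cases hD : D = 0
    · -- u ≠ v
      have huv : u ≠ v := fun h => hne ⟨h, hD⟩
      have hYne : u - v ≠ 0 := fun h => huv (by omega)
      subst hD
      have hYeven : Even (u - v) := ⟨k - v, by omega⟩
      have hXeven : Even (u + v) := ⟨k, by omega⟩
      have hGY : G p p' (u - v) = 0 := by
        refine G_eq_zero hp0 (Int.even_mul.2 (Or.inr hYeven)) ?_
        intro hdvd
        exact hYne (small_dvd_zero hp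
          (hco.dvd_of_dvd_mul_left (p_dvd_of_two_p_dvd hdvd)) (by omega) (by omega))
      have hGY' : G p p' (-(u - v)) = 0 := by
        refine G_eq_zero hp0 ?_ ?_
        · rw [mul_neg]
          exact (Int.even_mul.2 (Or.inr hYeven)).neg
        · rw [mul_neg, dvd_neg]
          intro hdvd
          exact hYne (small_dvd_zero hp
            (hco.dvd_of_dvd_mul_left (p_dvd_of_two_p_dvd hdvd)) (by omega) (by omega))
      have hX : ¬ (2 * p ∣ p' * (u + v)) := by
        intro hdvd
        have hpX : p ∣ u + v := hco.dvd_of_dvd_mul_left (p_dvd_of_two_p_dvd hdvd)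
        have hXp : u + v = p := by
          rcases hpX with ⟨j, hj⟩
          have hj1 : j = 1 := by
            rcases lt_trichotomy j 1 with h1 | h1 | h1
            · nlinarith [mul_le_mul_of_nonneg_left (show j ≤ (0:ℤ) by omega)
                (show (0:ℤ) ≤ p by omega)]
            · exact h1
            · nlinarith [mul_le_mul_of_nonneg_left (show (2:ℤ) ≤ j by omega)
                (show (0:ℤ) ≤ p by omega)]
          rw [hj1, mul_one] at hj
          exact hj
        have hpeven : Even p := by rw [← hXp]; exact hXeven
        have h2p : (2:ℤ) ∣ p := by
          rcases hpeven with ⟨m, hm⟩; exact ⟨m, by omega⟩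
        have h2p' : (2:ℤ) ∣ p' := by
          rw [hXp] at hdvd
          rcases hdvd with ⟨c, hc⟩
          refine ⟨c, ?_⟩
          have hpne : p ≠ 0 := by omega
          have : p' * p = (2 * c) * p := by linarith
          exact mul_right_cancel₀ hpne this
        rcases Int.isUnit_iff.1 (hco.isUnit_of_dvd' h2p h2p') with h | h <;> omega
      have hGX : G p p' (u + v) = 0 :=
        G_eq_zero hp0 (Int.even_mul.2 (Or.inr hXeven)) hX
      have hGX' : G p p' (-(u + v)) = 0 := by
        refine G_eq_zero hp0 ?_ ?_
        · rw [mul_neg]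
          exact (Int.even_mul.2 (Or.inr hXeven)).neg
        · rw [mul_neg, dvd_neg]
          exact hX
      rw [hGX, hGX', hGY, hGY']
      ring
    · -- G D = 0
      have hnd : ¬ (2 * p ∣ p' * D) := by
        intro hdvd
        exact hD (small_dvd_zero hp (hco.dvd_of_dvd_mul_left (p_dvd_of_two_p_dvd hdvd)) hD1 hD2)
      rw [G_eq_zero hp0 hpar hnd, mul_zero]
  · -- p'D odd
    have hp'odd : Odd p' := (Int.odd_mul.1 hpar).1
    have hDodd : Odd D := (Int.odd_mul.1 hpar).2
    have hXodd : Odd (u + v) := by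
      rcases hDodd with ⟨j, hj⟩; exact ⟨k + j, by omega⟩
    have hYodd : Odd (u - v) := by
      rcases hXodd with ⟨j, hj⟩; exact ⟨j - v, by omega⟩
    have h1 := G_pair (p' := p') hp0 (Int.odd_mul.2 ⟨hp'odd, hXodd⟩)
    have h2 := G_pair (p' := p') hp0 (Int.odd_mul.2 ⟨hp'odd, hYodd⟩)
    rw [show G p p' (u+v) + G p p' (-(u+v)) - G p p' (u-v) - G p p' (-(u-v))
      = (G p p' (u+v) + G p p' (-(u+v))) - (G p p' (u-v) + G p p' (-(u-v))) by ring,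
      h1, h2, sub_self, zero_mul]

lemma claimB (hp : 2 ≤ p) (hp' : 1 ≤ p') (hco : IsCoprime p p') {u v D : ℤ}
    (hu1 : 1 ≤ u) (hu2 : u ≤ p-1) (hv1 : 1 ≤ v) (hv2 : v ≤ p-1)
    (hD1 : -(p-1) ≤ D) (hD2 : D ≤ p-1) (hXD : ∃ k : ℤ, u + v - D = 2 * k) :
    (G' p p' (u+v) + G' p p' (-(u+v)) - G' p p' (u-v) - G' p p' (-(u-v))) * G' p p' D = 0 := by
  have hp0 : (0:ℤ) < p := by omega
  obtain ⟨k, hk⟩ := hXD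
  rcases Int.even_or_odd (p + p' * D) with hpar | hpar
  · rw [G'_eq_zero hp0 hco hD1 hD2 hpar, mul_zero]
  · have hmul : ∀ c : ℤ, (∃ j : ℤ, c - D = 2 * j) → Odd (p + p' * c) := by
      rintro c ⟨j, hj⟩
      rcases hpar with ⟨i, hi⟩
      refine ⟨i + p' * j, ?_⟩
      have : p' * c = p' * D + p' * (2 * j) := by linear_combination p' * hj
      linarith
    have h1 := G'_pair hp0 hco (hmul (u + v) ⟨k, by omega⟩)
    have h2 := G'_pair hp0 hco (hmul (u - v) ⟨k - v, by omega⟩)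
    rw [show G' p p' (u+v) + G' p p' (-(u+v)) - G' p p' (u-v) - G' p p' (-(u-v))
      = (G' p p' (u+v) + G' p p' (-(u+v))) - (G' p p' (u-v) + G' p p' (-(u-v))) by ring,
      h1, h2, sub_self, zero_mul]

lemma not_two_p_dvd_sum (hp : 2 ≤ p) (hco : IsCoprime p p') {u v : ℤ}
    (hu1 : 1 ≤ u) (hu2 : u ≤ p-1) (hv1 : 1 ≤ v) (hv2 : v ≤ p-1)
    (hXeven : Even (u + v)) : ¬ (2 * p ∣ p' * (u + v)) := by
  have hp0 : (0:ℤ) < p := by omega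
  intro hdvd
  have hpX : p ∣ u + v := hco.dvd_of_dvd_mul_left (p_dvd_of_two_p_dvd hdvd)
  have hXp : u + v = p := by
    rcases hpX with ⟨j, hj⟩
    have hj1 : j = 1 := by
      rcases lt_trichotomy j 1 with h1 | h1 | h1
      · nlinarith [mul_le_mul_of_nonneg_left (show j ≤ (0:ℤ) by omega)
          (show (0:ℤ) ≤ p by omega)]
      · exact h1
      · nlinarith [mul_le_mul_of_nonneg_left (show (2:ℤ) ≤ j by omega)
          (show (0:ℤ) ≤ p by omega)]
    rw [hj1, mul_one] at hj
    exact hj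
  have hpeven : Even p := by rw [← hXp]; exact hXeven
  have h2p : (2:ℤ) ∣ p := by
    rcases hpeven with ⟨m, hm⟩; exact ⟨m, by omega⟩
  have h2p' : (2:ℤ) ∣ p' := by
    rw [hXp] at hdvd
    rcases hdvd with ⟨c, hc⟩
    refine ⟨c, ?_⟩
    have hpne : p ≠ 0 := by omega
    have : p' * p = (2 * c) * p := by linarith
    exact mul_right_cancel₀ hpne this
  rcases Int.isUnit_iff.1 (hco.isUnit_of_dvd' h2p h2p') with h | h <;> omega

lemma double_sum_eval' (hp : 0 < p) (A B : ℤ → ℂ) :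
    ∑ rt ∈ Gset p, A rt.1 * B rt.2
      = (∑ r ∈ Finset.Icc (1:ℤ) (p-1), A r) * (∑ t ∈ Finset.Icc (0:ℤ) (p-1), B t) / 2
        - (∑ r ∈ Finset.Icc (1:ℤ) (p-1), (-1:ℂ)^r * A r) *
            (∑ t ∈ Finset.Icc (0:ℤ) (p-1), (-1:ℂ)^t * B t) / 2 := by
  unfold Gset
  exact double_sum_eval hp A B

end SaaAux

open SaaAux in
/-- Symmetry and unitarity of the atypical S-data. -/
theorem Saa_symmetric_unitary (p p' : ℤ) (hp : 2 ≤ p) (hp' : 1 ≤ p')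
    (hco : IsCoprime p p') (ε ε' : ℕ) (hε : ε ≤ 1) (hε' : ε' ≤ 1)
    (x y : ℤ × ℤ × ℤ) (hx : x ∈ SpectraSet p p') (hy : y ∈ SpectraSet p p') :
    Saa p p' ε ε' x y = Saa p p' ε' ε y x ∧
    (∑' z : SpectraSet p p', Saa p p' ε ε' x z.1 * (starRingEnd ℂ) (Saa p p' ε' ε z.1 y)) =
      if x = y then 1 else 0 := by
  have hp0 : (0:ℤ) < p := by omega
  have hpC : (p:ℂ) ≠ 0 := Int.cast_ne_zero.2 (by omega)
  constructor
  · simp only [Saa]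
    rw [show -((ε:ℤ) * ε') = -((ε':ℤ) * ε) by ring,
      show (1 - (ε':ℤ)) * x.2.1 + (1 - (ε:ℤ)) * y.2.1
        = (1 - (ε:ℤ)) * y.2.1 + (1 - (ε':ℤ)) * x.2.1 by ring,
      show π * ((p':ℝ)/p) * (x.1:ℝ) * (y.1:ℝ) = π * ((p':ℝ)/p) * (y.1:ℝ) * (x.1:ℝ) by ring,
      show (π:ℂ) * Complex.I * ((p':ℂ)/p) * ((x.1:ℂ) - 2*x.2.2 - 1 + ε) *
          ((y.1:ℂ) - 2*y.2.2 - 1 + ε')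
        = (π:ℂ) * Complex.I * ((p':ℂ)/p) * ((y.1:ℂ) - 2*y.2.2 - 1 + ε') *
          ((x.1:ℂ) - 2*x.2.2 - 1 + ε) by ring]
  · classical
    obtain ⟨hu1, hu2, hxs1, hxs2, hxe1, hxe2⟩ := mem_spectra_iff.1 hx
    obtain ⟨hv1, hv2, hys1, hys2, hye1, hye2⟩ := mem_spectra_iff.1 hy
    obtain ⟨htx1, htx2⟩ := tval_range hp hp' hx
    obtain ⟨hty1, hty2⟩ := tval_range hp hp' hy
    have hstep1 :
        (∑' z : SpectraSet p p', Saa p p' ε ε' x z.1 * (starRingEnd ℂ) (Saa p p' ε' ε z.1 y))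
          = ∑ w ∈ Fset p p', Saa p p' ε ε' x w * (starRingEnd ℂ) (Saa p p' ε' ε w y) := by
      rw [spectra_eq_coe hp hp']
      exact Finset.tsum_subtype' (Fset p p')
        (fun w => Saa p p' ε ε' x w * (starRingEnd ℂ) (Saa p p' ε' ε w y))
    have hstep2 : ∑ w ∈ Fset p p', Saa p p' ε ε' x w * (starRingEnd ℂ) (Saa p p' ε' ε w y)
        = ∑ rt ∈ Gset p,
            ((-1:ℂ) ^ ((1 - (ε':ℤ)) * (x.2.1 + y.2.1)) * (4 / (p:ℂ)^2)) *
            ((((Real.sin (π * ((p':ℝ)/p) * x.1 * rt.1) : ℝ) : ℂ) *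
              ((Real.sin (π * ((p':ℝ)/p) * rt.1 * y.1) : ℝ) : ℂ)) *
              ζ p p' ^ ((rt.2 + (ε':ℤ)) * (tval x - tval y))) := by
      refine Fset_to_Gset hp hp' _ _ (fun w => ?_)
      exact summand_eq ε ε' x y w
    have hstep3 : ∑ rt ∈ Gset p,
            ((-1:ℂ) ^ ((1 - (ε':ℤ)) * (x.2.1 + y.2.1)) * (4 / (p:ℂ)^2)) *
            ((((Real.sin (π * ((p':ℝ)/p) * x.1 * rt.1) : ℝ) : ℂ) *
              ((Real.sin (π * ((p':ℝ)/p) * rt.1 * y.1) : ℝ) : ℂ)) *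
              ζ p p' ^ ((rt.2 + (ε':ℤ)) * (tval x - tval y)))
        = ((-1:ℂ) ^ ((1 - (ε':ℤ)) * (x.2.1 + y.2.1)) * (4 / (p:ℂ)^2)) *
          ∑ rt ∈ Gset p,
            (fun r : ℤ => (((Real.sin (π * ((p':ℝ)/p) * x.1 * r) : ℝ) : ℂ) *
              ((Real.sin (π * ((p':ℝ)/p) * r * y.1) : ℝ) : ℂ))) rt.1 *
            (fun t : ℤ => ζ p p' ^ ((t + (ε':ℤ)) * (tval x - tval y))) rt.2 := by
      rw [Finset.mul_sum]
    have hstep4 := double_sum_eval' (p := p) hp0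
      (fun r : ℤ => (((Real.sin (π * ((p':ℝ)/p) * x.1 * r) : ℝ) : ℂ) *
        ((Real.sin (π * ((p':ℝ)/p) * r * y.1) : ℝ) : ℂ)))
      (fun t : ℤ => ζ p p' ^ ((t + (ε':ℤ)) * (tval x - tval y)))
    have hr1 := sum_r_plain (p' := p') hp x.1 y.1
    have hr2 := sum_r_sign (p' := p') hp x.1 y.1
    have ht1 := sum_t_plain (p' := p') hp (tval x - tval y) (ε':ℤ)
    have ht2 := sum_t_sign (p' := p') hp (tval x - tval y) (ε':ℤ)
    rw [hstep1, hstep2, hstep3, hstep4, hr1, hr2, ht1, ht2]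
    have hXD : ∃ k : ℤ, x.1 + y.1 - (tval x - tval y) = 2 * k := by
      refine ⟨y.1 + x.2.2 - y.2.2, ?_⟩
      unfold tval
      ring
    by_cases hxy : x = y
    · subst hxy
      rw [if_pos rfl]
      have hsgn : (-1:ℂ) ^ ((1 - (ε':ℤ)) * (x.2.1 + x.2.1)) = 1 :=
        Even.neg_one_zpow ⟨(1 - (ε':ℤ)) * x.2.1, by ring⟩
      have hG0 : G p p' 0 = (p:ℂ) := G_eq_p hp0 (by simp)
      have hGX : G p p' (x.1 + x.1) = 0 := by
        refine G_eq_zero hp0 (Int.even_mul.2 (Or.inr ⟨x.1, rfl⟩)) ?_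
        exact not_two_p_dvd_sum hp hco hu1 hu2 hu1 hu2 ⟨x.1, rfl⟩
      have hGX' : G p p' (-(x.1 + x.1)) = 0 := by
        refine G_eq_zero hp0 ?_ ?_
        · rw [mul_neg]
          exact (Int.even_mul.2 (Or.inr ⟨x.1, rfl⟩)).neg
        · rw [mul_neg, dvd_neg]
          exact not_two_p_dvd_sum hp hco hu1 hu2 hu1 hu2 ⟨x.1, rfl⟩
      have hB := claimB hp hp' hco hu1 hu2 hu1 hu2
        (show -(p-1) ≤ x.1 - x.1 by omega) (show x.1 - x.1 ≤ p - 1 by omega)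
        (by rw [sub_self, sub_zero]; exact ⟨x.1, by ring⟩)
      simp only [sub_self, neg_zero, mul_zero, zpow_zero] at hB ⊢
      rw [hG0, hGX, hGX', hsgn]
      have hterm2 : (-(1/4) * (G' p p' (x.1+x.1) + G' p p' (-(x.1+x.1))
          - G' p p' 0 - G' p p' 0)) * (1 * G' p p' 0) / 2 = 0 := by
        linear_combination (-(1/8)) * hB
      rw [hterm2, sub_zero]
      field_simp
      ring
    · rw [if_neg hxy]
      have hDne : ¬ (x.1 = y.1 ∧ tval x - tval y = 0) := by
        rintro ⟨h1, h2⟩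
        exact hxy (spectra_inj hp hx hy h1 (by omega))
      have hA := claimA hp hp' hco hu1 hu2 hv1 hv2
        (show -(p-1) ≤ tval x - tval y by omega) (show tval x - tval y ≤ p - 1 by omega)
        hXD hDne
      have hB := claimB hp hp' hco hu1 hu2 hv1 hv2
        (show -(p-1) ≤ tval x - tval y by omega) (show tval x - tval y ≤ p - 1 by omega)
        hXD
      set c : ℂ := (-1:ℂ) ^ ((1 - (ε':ℤ)) * (x.2.1 + y.2.1))
      set w : ℂ := ζ p p' ^ ((ε':ℤ) * (tval x - tval y))
      linear_combination (-(c * (4 / (p:ℂ)^2) * w / 8)) * hA + (c * (4 / (p:ℂ)^2) * w / 8) * hB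

end
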